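/- Let $A$ be a complex unital Banach algebra, $L \in A$, $T > 0$, and $R > \|L\|$. Then $\int_0^T \exp(tL)\,dt = \frac{1}{2\pi i}\oint_{|z|=R} e^{zT}\,\frac{1 - e^{-zT}}{z}\,(z\cdot 1 - L)^{-1}\,dz$, where the integral on the right is the counterclockwise circle integral over the circle of radius $R$ centered at $0$ (note every such $z$ is nonzero and $z\cdot 1 - L$ is invertible). -/

import Mathlib

open scoped Real
open MeasureTheory Metric intervalIntegral

lemma hasSum_circleIntegral_of_bound
    {E : Type*} [NormedAddCommGroup E] [NormedSpace ℂ E]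
    {F : ℕ → ℂ → E} {g : ℂ → E} {R : ℝ} (hR : 0 < R)
    (hcont : ∀ n, Continuous fun θ : ℝ => F n (circleMap 0 R θ))
    (bound : ℕ → ℝ)
    (hb : ∀ n, ∀ z ∈ sphere (0:ℂ) R, ‖F n z‖ ≤ bound n)
    (hsb : Summable bound)
    (hg : ∀ z ∈ sphere (0:ℂ) R, HasSum (fun n => F n z) (g z)) :
    HasSum (fun n => ∮ z in C(0, R), F n z) (∮ z in C(0, R), g z) := by
  simp only [circleIntegral, deriv_circleMap]
  refine intervalIntegral.hasSum_integral_of_dominated_convergence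
    (fun n _ => R * bound n) (fun n => ?_) (fun n => ?_) ?_ ?_ ?_
  · exact (((continuous_circleMap 0 R).mul continuous_const).smul (hcont n)).aestronglyMeasurable
  · refine Filter.Eventually.of_forall fun θ _ => ?_
    rw [norm_smul]
    have h1 : ‖circleMap 0 R θ * Complex.I‖ = R := by
      simp [norm_circleMap_zero, _root_.abs_of_pos hR]
    rw [h1]
    exact mul_le_mul_of_nonneg_left (hb n _ (circleMap_mem_sphere 0 hR.le θ)) hR.le
  · exact Filter.Eventually.of_forall fun θ _ => hsb.mul_left R
  · exact intervalIntegrable_const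
  · exact Filter.Eventually.of_forall fun θ _ =>
      (hg _ (circleMap_mem_sphere 0 hR.le θ)).const_smul _

lemma circleIntegral_exp_sub_one (T : ℝ) {R : ℝ} (hR : 0 < R) (n : ℕ) :
    (∮ z in C(0, R), (Complex.exp (z * T) - 1) * z⁻¹ ^ (n + 2)) =
      (2 * π * Complex.I) * ((T : ℂ) ^ (n + 1) / (Nat.factorial (n + 1) : ℂ)) := by
  have hswap : HasSum
      (fun k : ℕ => ∮ z in C(0, R),
        ((z * (T:ℂ)) ^ (k + 1) / (Nat.factorial (k + 1) : ℂ)) * z⁻¹ ^ (n + 2))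
      (∮ z in C(0, R), (Complex.exp (z * T) - 1) * z⁻¹ ^ (n + 2)) := by
    refine hasSum_circleIntegral_of_bound hR (fun k => ?_)
      (fun k => (R * |T|) ^ (k + 1) / (Nat.factorial (k + 1)) * (R⁻¹) ^ (n + 2))
      (fun k z hz => ?_) ?_ (fun z hz => ?_)
    · exact ((((continuous_circleMap 0 R).mul continuous_const).pow _).div_const _).mul
        (((continuous_circleMap 0 R).inv₀ fun θ => circleMap_ne_center hR.ne').pow _)
    · have hzn : ‖z‖ = R := mem_sphere_zero_iff_norm.mp hz
      have : ‖((z * (T:ℂ)) ^ (k + 1) / (Nat.factorial (k + 1) : ℂ)) * z⁻¹ ^ (n + 2)‖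
          = (R * |T|) ^ (k + 1) / (Nat.factorial (k + 1)) * (R⁻¹) ^ (n + 2) := by
        rw [norm_mul, norm_div, norm_pow, norm_pow, norm_inv, norm_mul, hzn]
        simp [Complex.norm_natCast, Complex.norm_real]
      exact this.le
    · exact (((summable_nat_add_iff 1).2
        (Real.summable_pow_div_factorial (R * |T|))).mul_right _)
    · have h := NormedSpace.expSeries_div_hasSum_exp (z * (T:ℂ))
      have h2 := (hasSum_nat_add_iff' (f := fun k => (z * (T:ℂ)) ^ k / (Nat.factorial k : ℂ)) 1).2 h
      simp only [Finset.range_one, Finset.sum_singleton, pow_zero, Nat.factorial_zero,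
        Nat.cast_one, div_one] at h2
      rw [Complex.exp_eq_exp_ℂ]
      exact h2.mul_right _
  have hterm : ∀ k : ℕ,
      (∮ z in C(0, R), ((z * (T:ℂ)) ^ (k + 1) / (Nat.factorial (k + 1) : ℂ)) * z⁻¹ ^ (n + 2))
        = if k = n then (2 * π * Complex.I) * ((T : ℂ) ^ (n + 1) / (Nat.factorial (n + 1) : ℂ))
          else 0 := by
    intro k
    have hFk : (fun z : ℂ => ((z * (T:ℂ)) ^ (k + 1) / (Nat.factorial (k + 1) : ℂ)) * z⁻¹ ^ (n + 2))
        = fun z : ℂ => ((T:ℂ) ^ (k + 1) / (Nat.factorial (k + 1) : ℂ)) •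
            (z ^ (k + 1) * z⁻¹ ^ (n + 2)) := by
      funext z; simp only [smul_eq_mul]; ring
    have hpow : (∮ z in C(0, R), z ^ (k + 1) * z⁻¹ ^ (n + 2))
        = ∮ z in C(0, R), (z - 0) ^ ((k : ℤ) - n - 1) := by
      refine circleIntegral.integral_congr hR.le fun z hz => ?_
      have hz0 : z ≠ 0 := by
        intro h
        rw [mem_sphere_zero_iff_norm, h, norm_zero] at hz
        exact hR.ne hz
      rw [sub_zero, ← zpow_natCast z (k + 1), ← zpow_natCast z⁻¹ (n + 2), inv_zpow,
        ← zpow_neg, ← zpow_add₀ hz0]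
      congr 1
      push_cast; ring
    have hval : (∮ z in C(0, R), (z - 0) ^ ((k : ℤ) - n - 1))
        = if k = n then 2 * π * Complex.I else 0 := by
      by_cases hk : k = n
      · subst hk
        rw [if_pos rfl, show ((k : ℤ) - k - 1) = -1 by ring]
        have := circleIntegral.integral_sub_inv_of_mem_ball (Metric.mem_ball_self hR (x := (0:ℂ)))
        simpa [zpow_neg, zpow_one] using this
      · rw [if_neg hk]
        refine circleIntegral.integral_sub_zpow_of_ne ?_ 0 0 R
        omega
    rw [hFk, circleIntegral.integral_smul, hpow, hval]
    by_cases hk : k = n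
    · subst hk; simp only [eq_self_iff_true, if_true, smul_eq_mul]; ring
    · simp [hk]
  simp only [hterm] at hswap
  exact hswap.unique (hasSum_ite_eq n _)


lemma hasSum_resolvent {A : Type*} [NormedRing A] [NormedAlgebra ℂ A] [CompleteSpace A]
    (L : A) {z : ℂ} (hz : ‖L‖ < ‖z‖) :
    HasSum (fun n : ℕ => z⁻¹ ^ (n + 1) • L ^ n) (Ring.inverse (algebraMap ℂ A z - L)) := by
  have hz0 : (0:ℝ) < ‖z‖ := (norm_nonneg L).trans_lt hz
  have hzne : z ≠ 0 := norm_pos_iff.mp hz0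
  have ht : ‖z⁻¹ • L‖ < 1 := by
    rw [norm_smul, norm_inv, inv_mul_eq_div]
    exact (div_lt_one hz0).mpr hz
  have hgeom := hasSum_geom_series_inverse (z⁻¹ • L) ht
  have hfact : algebraMap ℂ A z - L = z • (1 - z⁻¹ • L) := by
    rw [smul_sub, smul_smul, mul_inv_cancel₀ hzne, one_smul, Algebra.algebraMap_eq_smul_one]
  have hiso : Ring.inverse (algebraMap ℂ A z - L) = z⁻¹ • Ring.inverse (1 - z⁻¹ • L) := by
    obtain ⟨u, hu⟩ := isUnit_one_sub_of_norm_lt_one ht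
    have h1 : (algebraMap ℂ A z - L) * (z⁻¹ • (↑u⁻¹ : A)) = 1 := by
      rw [hfact, smul_mul_smul_comm, mul_inv_cancel₀ hzne, ← hu, u.mul_inv, one_smul]
    have h2 : (z⁻¹ • (↑u⁻¹ : A)) * (algebraMap ℂ A z - L) = 1 := by
      rw [hfact, smul_mul_smul_comm, inv_mul_cancel₀ hzne, ← hu, u.inv_mul, one_smul]
    have hU : algebraMap ℂ A z - L
        = ((⟨algebraMap ℂ A z - L, z⁻¹ • (↑u⁻¹ : A), h1, h2⟩ : Aˣ) : A) := rfl
    rw [hU, Ring.inverse_unit, ← hu, Ring.inverse_unit]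
    rfl
  rw [hiso]
  simpa only [smul_pow, smul_smul, ← pow_succ'] using hgeom.const_smul (z⁻¹ : ℂ)

/-- The time-integrated Koopman semigroup `∫₀ᵀ e^{tL} dt` of a bounded generator `L`
in a complex unital Banach algebra is recovered from the resolvent by the
counterclockwise contour integral
`∫₀ᵀ e^{tL} dt = (2πi)⁻¹ ∮_{|z|=R} e^{zT} (1 - e^{-zT})/z · (z·1 - L)⁻¹ dz`
over any circle of radius `R > ‖L‖` centered at the origin. -/
theorem integral_exp_eq_circleIntegral_resolvent
    {A : Type*} [NormedRing A] [NormedAlgebra ℂ A] [CompleteSpace A]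
    (L : A) (T : ℝ) (hT : 0 < T) (R : ℝ) (hR : ‖L‖ < R) :
    ∫ t in (0:ℝ)..T, NormedSpace.exp ((t : ℂ) • L) =
      (2 * π * Complex.I)⁻¹ •
        ∮ z in C(0, R),
          (Complex.exp (z * T) * (1 - Complex.exp (-z * T)) / z) •
            Ring.inverse (algebraMap ℂ A z - L) := by
  have hR0 : 0 < R := (norm_nonneg L).trans_lt hR
  set M₁ : ℝ := max ‖(1 : A)‖ 1 with hM₁
  have hM₁pos : 0 < M₁ := lt_of_lt_of_le one_pos (le_max_right _ _)
  have hpowL : ∀ n : ℕ, ‖L ^ n‖ ≤ M₁ * ‖L‖ ^ n := by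
    intro n
    rcases Nat.eq_zero_or_pos n with h0 | hpos
    · subst h0; simp only [pow_zero, mul_one]; exact le_max_left _ _
    · calc ‖L ^ n‖ ≤ ‖L‖ ^ n := norm_pow_le' L hpos
        _ ≤ M₁ * ‖L‖ ^ n := by
          nlinarith [pow_nonneg (norm_nonneg L) n, hM₁pos, le_max_right ‖(1:A)‖ (1:ℝ)]
  set a : ℕ → A := fun n => ((T : ℂ) ^ (n + 1) / (Nat.factorial (n + 1) : ℂ)) • L ^ n with ha
  -- LHS
  have h2pi : (2 * (π:ℂ) * Complex.I) ≠ 0 := by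
    simp [Real.pi_ne_zero, Complex.I_ne_zero, Complex.ofReal_ne_zero]
  have hLsum : HasSum
      (fun n : ℕ => ∫ t in (0:ℝ)..T, ((t : ℂ) ^ n / (Nat.factorial n : ℂ)) • L ^ n)
      (∫ t in (0:ℝ)..T, NormedSpace.exp ((t : ℂ) • L)) := by
    refine intervalIntegral.hasSum_integral_of_dominated_convergence
      (fun n _ => (T * ‖L‖) ^ n / (Nat.factorial n) * M₁) (fun n => ?_) (fun n => ?_) ?_ ?_ ?_
    · exact (((Complex.continuous_ofReal.pow n).div_const _).smul continuous_const
        ).aestronglyMeasurable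
    · refine Filter.Eventually.of_forall fun t ht => ?_
      rw [Set.uIoc_of_le hT.le] at ht
      rw [norm_smul, norm_div]
      have h1 : ‖(t : ℂ) ^ n‖ ≤ T ^ n := by
        rw [norm_pow, Complex.norm_real, Real.norm_eq_abs, abs_of_pos ht.1]
        exact pow_le_pow_left₀ ht.1.le ht.2 n
      have h2 : ‖((Nat.factorial n : ℂ))‖ = (Nat.factorial n : ℝ) := by
        simp
      rw [h2]
      calc ‖(t:ℂ) ^ n‖ / (Nat.factorial n : ℝ) * ‖L ^ n‖
          = ‖(t:ℂ) ^ n‖ * ‖L ^ n‖ / (Nat.factorial n : ℝ) := by ring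
        _ ≤ T ^ n * (M₁ * ‖L‖ ^ n) / (Nat.factorial n : ℝ) := by
            refine (div_le_div_iff_of_pos_right (by positivity)).mpr ?_
            exact mul_le_mul h1 (hpowL n) (norm_nonneg _) (by positivity)
        _ = (T * ‖L‖) ^ n / (Nat.factorial n : ℝ) * M₁ := by
            rw [mul_pow]; ring
    · exact Filter.Eventually.of_forall fun t _ =>
        ((Real.summable_pow_div_factorial (T * ‖L‖)).mul_right M₁)
    · exact intervalIntegrable_const
    · refine Filter.Eventually.of_forall fun t _ => ?_
      have h := NormedSpace.exp_series_hasSum_exp' (𝕂 := ℂ) ((t : ℂ) • L)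
      simpa only [smul_pow, smul_smul, inv_mul_eq_div] using h
  have hterm1 : ∀ n : ℕ,
      (∫ t in (0:ℝ)..T, ((t : ℂ) ^ n / (Nat.factorial n : ℂ)) • L ^ n) = a n := by
    intro n
    rw [intervalIntegral.integral_smul_const]
    congr 1
    have hid : (fun t : ℝ => (t : ℂ) ^ n / (Nat.factorial n : ℂ))
        = fun t : ℝ => (Nat.factorial n : ℂ)⁻¹ • ((t ^ n : ℝ) : ℂ) := by
      funext t; push_cast; rw [smul_eq_mul]; ring
    rw [hid, intervalIntegral.integral_smul, intervalIntegral.integral_ofReal, integral_pow]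
    have hne1 : ((n : ℂ) + 1) ≠ 0 := by
      have h := Nat.cast_ne_zero (R := ℂ) |>.mpr (Nat.succ_ne_zero n)
      push_cast at h; exact h
    have hne2 : ((Nat.factorial n : ℂ)) ≠ 0 := Nat.cast_ne_zero.mpr (Nat.factorial_ne_zero n)
    rw [smul_eq_mul]
    push_cast [Nat.factorial_succ]
    rw [zero_pow (Nat.succ_ne_zero n)]
    field_simp
    try ring_nf
    try tauto
  simp only [hterm1] at hLsum
  -- RHS
  have hRswap : HasSum
      (fun n : ℕ => ∮ z in C(0, R), ((Complex.exp (z * T) - 1) * z⁻¹ ^ (n + 2)) • L ^ n)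
      (∮ z in C(0, R), (Complex.exp (z * T) * (1 - Complex.exp (-z * T)) / z) •
        Ring.inverse (algebraMap ℂ A z - L)) := by
    refine hasSum_circleIntegral_of_bound hR0 (fun n => ?_)
      (fun n => (Real.exp (R * T) + 1) / R ^ 2 * M₁ * (‖L‖ / R) ^ n)
      (fun n z hz => ?_) ?_ (fun z hz => ?_)
    · exact ((((((continuous_circleMap 0 R).mul continuous_const).cexp).sub
        continuous_const).mul (((continuous_circleMap 0 R).inv₀
          fun θ => circleMap_ne_center hR0.ne').pow _)).smul continuous_const)
    · have hzn : ‖z‖ = R := mem_sphere_zero_iff_norm.mp hz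
      have hexp : ‖Complex.exp (z * T) - 1‖ ≤ Real.exp (R * T) + 1 := by
        refine (norm_sub_le _ _).trans ?_
        have h1 : ‖Complex.exp (z * T)‖ ≤ Real.exp (R * T) := by
          rw [Complex.norm_exp]
          refine Real.exp_le_exp.mpr ?_
          calc (z * T).re ≤ ‖z * T‖ := Complex.re_le_norm _
            _ = R * T := by
              rw [norm_mul, hzn,
                Complex.norm_real, Real.norm_eq_abs, abs_of_pos hT]
        rw [norm_one]
        exact add_le_add h1 le_rfl
      rw [norm_smul, norm_mul, norm_pow, norm_inv, hzn]
      calc ‖Complex.exp (z * T) - 1‖ * R⁻¹ ^ (n + 2) * ‖L ^ n‖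
          ≤ (Real.exp (R * T) + 1) * R⁻¹ ^ (n + 2) * (M₁ * ‖L‖ ^ n) := by
            refine mul_le_mul (mul_le_mul_of_nonneg_right hexp (by positivity)) (hpowL n)
              (norm_nonneg _) (by positivity)
        _ = (Real.exp (R * T) + 1) / R ^ 2 * M₁ * (‖L‖ / R) ^ n := by
            rw [div_pow]
            field_simp
            rw [show R ^ 2 * (1 / R) ^ (n + 2) * ‖L‖ ^ n * R ^ n = (R * (1 / R)) ^ (n + 2) * ‖L‖ ^ n by ring,
              mul_one_div_cancel hR0.ne', one_pow, one_mul]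
    · refine Summable.mul_left _ ?_
      exact summable_geometric_of_lt_one (by positivity) ((div_lt_one hR0).mpr hR)
    · have hzn : ‖z‖ = R := mem_sphere_zero_iff_norm.mp hz
      have hzne : z ≠ 0 := by
        intro h; rw [h, norm_zero] at hzn; exact hR0.ne hzn
      have hres := hasSum_resolvent L (z := z) (by rw [hzn]; exact hR)
      have h := hres.const_smul (Complex.exp (z * T) * (1 - Complex.exp (-z * T)) / z)
      have hexp1 : Complex.exp (z * T) * (1 - Complex.exp (-z * T)) = Complex.exp (z * T) - 1 := by
        rw [mul_sub, mul_one, ← Complex.exp_add]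
        norm_num
      refine HasSum.congr_fun h fun x => ?_
      rw [smul_smul]
      congr 1
      rw [hexp1, div_eq_mul_inv, pow_succ]
      ring
  have hterm2 : ∀ n : ℕ,
      (∮ z in C(0, R), ((Complex.exp (z * T) - 1) * z⁻¹ ^ (n + 2)) • L ^ n)
        = ((2 * (π:ℂ) * Complex.I) * ((T : ℂ) ^ (n + 1) / (Nat.factorial (n + 1) : ℂ))) • L ^ n := by
    intro n
    rw [circleIntegral.integral_smul_const, circleIntegral_exp_sub_one T hR0 n]
  simp only [hterm2] at hRswap
  have hfinal := hRswap.const_smul ((2 * (π:ℂ) * Complex.I)⁻¹)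
  simp only [smul_smul, inv_mul_cancel_left₀ h2pi] at hfinal
  exact hLsum.unique hfinal
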